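/- Let Q be the uniform probability measure on the equator {(x₁, x₂, 0) : x₁² + x₂² = 1} of S². Then the set of minimizers of the intrinsic Fréchet function F(p) = ∫ ρ_g²(p,q) Q(dq), where ρ_g is the geodesic distance on S², is exactly the two poles {(0,0,1), (0,0,−1)}. -/

import Mathlib

open MeasureTheory

open Real in
private lemma aux_cont (a b : ℝ) :
    Continuous (fun θ : ℝ => Real.arccos (a * Real.cos θ + b * Real.sin θ) ^ 2) :=
  (Real.continuous_arccos.comp (by continuity)).pow 2

open Real in
private lemma aux_pair (a b θ : ℝ) :
    Real.arccos (a * Real.cos θ + b * Real.sin θ) ^ 2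
      + Real.arccos (a * Real.cos (θ + π) + b * Real.sin (θ + π)) ^ 2
      = 2 * (Real.arccos (a * Real.cos θ + b * Real.sin θ) - π / 2) ^ 2 + π ^ 2 / 2 := by
  rw [Real.cos_add_pi, Real.sin_add_pi]
  rw [show a * -Real.cos θ + b * -Real.sin θ = -(a * Real.cos θ + b * Real.sin θ) by ring]
  rw [Real.arccos_neg]
  ring

open Real in
private lemma aux_split (a b : ℝ) :
    ∫ θ in (0:ℝ)..(2*π), Real.arccos (a * Real.cos θ + b * Real.sin θ) ^ 2
      = ∫ θ in (0:ℝ)..π, (Real.arccos (a * Real.cos θ + b * Real.sin θ) ^ 2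
          + Real.arccos (a * Real.cos (θ + π) + b * Real.sin (θ + π)) ^ 2) := by
  have hc := aux_cont a b
  have h1 : IntervalIntegrable
      (fun θ : ℝ => Real.arccos (a * Real.cos θ + b * Real.sin θ) ^ 2) volume 0 π :=
    hc.intervalIntegrable _ _
  have h2 : IntervalIntegrable
      (fun θ : ℝ => Real.arccos (a * Real.cos θ + b * Real.sin θ) ^ 2) volume π (2*π) :=
    hc.intervalIntegrable _ _
  have h3 : IntervalIntegrable
      (fun θ : ℝ => Real.arccos (a * Real.cos (θ + π) + b * Real.sin (θ + π)) ^ 2) volume 0 π :=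
    (hc.comp (by continuity)).intervalIntegrable _ _
  rw [← intervalIntegral.integral_add_adjacent_intervals h1 h2,
    intervalIntegral.integral_add h1 h3]
  congr 1
  rw [intervalIntegral.integral_comp_add_right
    (fun θ : ℝ => Real.arccos (a * Real.cos θ + b * Real.sin θ) ^ 2) π]
  norm_num [two_mul]

open Real in
private lemma aux_ptwise (a b θ : ℝ) :
    π ^ 2 / 2 ≤ Real.arccos (a * Real.cos θ + b * Real.sin θ) ^ 2
      + Real.arccos (a * Real.cos (θ + π) + b * Real.sin (θ + π)) ^ 2 := by
  rw [aux_pair]; nlinarith [sq_nonneg (Real.arccos (a * Real.cos θ + b * Real.sin θ) - π / 2)]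

open Real in
private lemma aux_lb (a b : ℝ) :
    π ^ 3 / 2 ≤ ∫ θ in (0:ℝ)..(2*π), Real.arccos (a * Real.cos θ + b * Real.sin θ) ^ 2 := by
  rw [aux_split]
  have hmono := intervalIntegral.integral_mono_on (f := fun _ : ℝ => π ^ 2 / 2)
    (g := fun θ : ℝ => Real.arccos (a * Real.cos θ + b * Real.sin θ) ^ 2
      + Real.arccos (a * Real.cos (θ + π) + b * Real.sin (θ + π)) ^ 2)
    (μ := volume) Real.pi_nonneg intervalIntegrable_const
    (((aux_cont a b).add ((aux_cont a b).comp (by continuity))).intervalIntegrable _ _)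
    (fun x _ => aux_ptwise a b x)
  calc π ^ 3 / 2 = ∫ _ in (0:ℝ)..π, (π ^ 2 / 2) := by simp; ring
    _ ≤ _ := hmono

open Real in
private lemma aux_strict (a b : ℝ) (hab : a ^ 2 + b ^ 2 ≤ 1) (hne : a ≠ 0 ∨ b ≠ 0) :
    π ^ 3 / 2 < ∫ θ in (0:ℝ)..(2*π), Real.arccos (a * Real.cos θ + b * Real.sin θ) ^ 2 := by
  rw [aux_split]
  have hgc : ContinuousOn (fun θ : ℝ => Real.arccos (a * Real.cos θ + b * Real.sin θ) ^ 2
      + Real.arccos (a * Real.cos (θ + π) + b * Real.sin (θ + π)) ^ 2) (Set.Icc 0 π) :=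
    (((aux_cont a b).add ((aux_cont a b).comp (by continuity)))).continuousOn
  obtain ⟨θ₀, hθ₀, ht⟩ : ∃ θ₀ ∈ Set.Icc (0:ℝ) π, a * Real.cos θ₀ + b * Real.sin θ₀ ≠ 0 := by
    rcases hne with ha | hb
    · exact ⟨0, ⟨le_refl 0, Real.pi_nonneg⟩, by simpa using ha⟩
    · exact ⟨π/2, ⟨by positivity, by linarith [Real.pi_pos]⟩, by simpa using hb⟩
  have hlt : π ^ 2 / 2 < Real.arccos (a * Real.cos θ₀ + b * Real.sin θ₀) ^ 2
      + Real.arccos (a * Real.cos (θ₀ + π) + b * Real.sin (θ₀ + π)) ^ 2 := by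
    rw [aux_pair]
    have ht1 : (a * Real.cos θ₀ + b * Real.sin θ₀) ^ 2 ≤ 1 := by
      nlinarith [Real.sin_sq_add_cos_sq θ₀, sq_nonneg (a * Real.sin θ₀ - b * Real.cos θ₀)]
    have harc : Real.arccos (a * Real.cos θ₀ + b * Real.sin θ₀) ≠ π / 2 := by
      intro h
      apply ht
      have hle : -1 ≤ a * Real.cos θ₀ + b * Real.sin θ₀ := by nlinarith
      have hge : a * Real.cos θ₀ + b * Real.sin θ₀ ≤ 1 := by nlinarith
      have := Real.cos_arccos hle hge
      rw [h, Real.cos_pi_div_two] at this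
      linarith
    have : 0 < (Real.arccos (a * Real.cos θ₀ + b * Real.sin θ₀) - π / 2) ^ 2 :=
      pow_pos (abs_pos.mpr (sub_ne_zero.mpr harc)) 2 |>.trans_eq (by rw [sq_abs])
    nlinarith
  have := intervalIntegral.integral_lt_integral_of_continuousOn_of_le_of_exists_lt
    (f := fun _ : ℝ => π ^ 2 / 2) Real.pi_pos continuousOn_const hgc
    (fun x _ => aux_ptwise a b x) ⟨θ₀, hθ₀, hlt⟩
  calc π ^ 3 / 2 = ∫ _ in (0:ℝ)..π, (π ^ 2 / 2) := by simp; ring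
    _ < _ := this

private lemma aux_Feq (p : EuclideanSpace ℝ (Fin 3)) :
    ∫ x, Real.arccos (inner ℝ p x : ℝ) ^ 2
      ∂(Measure.map (fun θ : ℝ => (!₂[Real.cos θ, Real.sin θ, 0] : EuclideanSpace ℝ (Fin 3)))
        ((ENNReal.ofReal (2 * Real.pi))⁻¹ • volume.restrict (Set.Ico 0 (2 * Real.pi))))
      = (2 * Real.pi)⁻¹ *
        ∫ θ in (0:ℝ)..(2 * Real.pi),
          Real.arccos (p 0 * Real.cos θ + p 1 * Real.sin θ) ^ 2 := by
  have h2pi : (0:ℝ) ≤ 2 * Real.pi := by positivity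
  have hq : Continuous (fun θ : ℝ =>
      (!₂[Real.cos θ, Real.sin θ, 0] : EuclideanSpace ℝ (Fin 3))) := by
    refine (PiLp.continuous_toLp 2 _).comp ?_
    apply continuous_pi
    intro i
    fin_cases i <;> simp <;> continuity
  have hcont : Continuous
      (fun x : EuclideanSpace ℝ (Fin 3) => Real.arccos (inner ℝ p x : ℝ) ^ 2) :=
    (Real.continuous_arccos.comp (continuous_const.inner continuous_id)).pow 2
  rw [MeasureTheory.integral_map hq.aemeasurable hcont.aestronglyMeasurable]
  rw [MeasureTheory.integral_smul_measure]
  rw [ENNReal.toReal_inv, ENNReal.toReal_ofReal h2pi]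
  have hinner : ∀ θ : ℝ,
      (inner ℝ p (!₂[Real.cos θ, Real.sin θ, 0] : EuclideanSpace ℝ (Fin 3)) : ℝ)
        = p 0 * Real.cos θ + p 1 * Real.sin θ := by
    intro θ; simp [PiLp.inner_apply, Fin.sum_univ_three]; ring
  simp only [hinner]
  rw [smul_eq_mul]
  congr 1
  rw [MeasureTheory.integral_Ico_eq_integral_Ioo, ← MeasureTheory.integral_Ioc_eq_integral_Ioo,
    ← intervalIntegral.integral_of_le h2pi]

/-- For the uniform distribution on the equator of `S²`, the minimizers of the
intrinsic Fréchet function are exactly the north and south poles. -/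
theorem intrinsic_frechet_minimizers_equator
    (Q : Measure (EuclideanSpace ℝ (Fin 3)))
    (hQ : Q = Measure.map
      (fun θ : ℝ => (!₂[Real.cos θ, Real.sin θ, 0] : EuclideanSpace ℝ (Fin 3)))
      ((ENNReal.ofReal (2 * Real.pi))⁻¹ • volume.restrict (Set.Ico 0 (2 * Real.pi))))
    (F : EuclideanSpace ℝ (Fin 3) → ℝ)
    (hF : ∀ p, F p = ∫ x, Real.arccos (inner ℝ p x : ℝ) ^ 2 ∂Q) :
    {p | p ∈ Metric.sphere (0 : EuclideanSpace ℝ (Fin 3)) 1 ∧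
        ∀ q ∈ Metric.sphere (0 : EuclideanSpace ℝ (Fin 3)) 1, F p ≤ F q} =
      {(!₂[0, 0, 1] : EuclideanSpace ℝ (Fin 3)),
       (!₂[0, 0, -1] : EuclideanSpace ℝ (Fin 3))} := by
  have hπ := Real.pi_pos
  have h2pi : (0:ℝ) ≤ 2 * Real.pi := by positivity
  -- rewrite F as an interval integral
  have hFeq : ∀ p : EuclideanSpace ℝ (Fin 3),
      F p = (2 * Real.pi)⁻¹ *
        ∫ θ in (0:ℝ)..(2 * Real.pi),
          Real.arccos (p 0 * Real.cos θ + p 1 * Real.sin θ) ^ 2 := by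
    intro p
    rw [hF, hQ]
    exact aux_Feq p
  -- sphere membership facts
  have hsph : ∀ p ∈ Metric.sphere (0 : EuclideanSpace ℝ (Fin 3)) 1,
      (p 0) ^ 2 + (p 1) ^ 2 + (p 2) ^ 2 = 1 := by
    intro p hp
    have hnrm := mem_sphere_zero_iff_norm.mp hp
    rw [EuclideanSpace.norm_eq] at hnrm
    have h2 : (∑ i, p i ^ 2) = 1 := by
      have := congrArg (·^2) hnrm
      simpa [Real.sq_sqrt, Finset.sum_nonneg (fun i _ => sq_nonneg (p i))] using this
    simpa [Fin.sum_univ_three] using h2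
  have hnorth : (!₂[0, 0, 1] : EuclideanSpace ℝ (Fin 3))
      ∈ Metric.sphere (0 : EuclideanSpace ℝ (Fin 3)) 1 := by
    rw [show (!₂[0,0,1] : EuclideanSpace ℝ (Fin 3))
        ∈ Metric.sphere (0 : EuclideanSpace ℝ (Fin 3)) 1 ↔ _ from mem_sphere_zero_iff_norm,
      EuclideanSpace.norm_eq]
    norm_num [Fin.sum_univ_three]
    simp [Matrix.cons_val]
  have hsouth : (!₂[0, 0, -1] : EuclideanSpace ℝ (Fin 3))
      ∈ Metric.sphere (0 : EuclideanSpace ℝ (Fin 3)) 1 := by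
    rw [show (!₂[0,0,-1] : EuclideanSpace ℝ (Fin 3))
        ∈ Metric.sphere (0 : EuclideanSpace ℝ (Fin 3)) 1 ↔ _ from mem_sphere_zero_iff_norm,
      EuclideanSpace.norm_eq]
    norm_num [Fin.sum_univ_three]
    simp [Matrix.cons_val]
  -- value of F at points with vanishing first two coordinates
  have hpole : ∀ p : EuclideanSpace ℝ (Fin 3), p 0 = 0 → p 1 = 0 →
      F p = Real.pi ^ 2 / 4 := by
    intro p h0 h1
    rw [hFeq p, h0, h1]
    simp [Real.arccos_zero]
    field_simp
    ring
  -- lower bound on F over the sphere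
  have hlbF : ∀ q ∈ Metric.sphere (0 : EuclideanSpace ℝ (Fin 3)) 1,
      Real.pi ^ 2 / 4 ≤ F q := by
    intro q _
    rw [hFeq q]
    have := aux_lb (q 0) (q 1)
    calc Real.pi ^ 2 / 4 = (2 * Real.pi)⁻¹ * (Real.pi ^ 3 / 2) := by field_simp; ring
      _ ≤ _ := by
        apply mul_le_mul_of_nonneg_left this
        positivity
  -- strict lower bound away from poles
  have hstrictF : ∀ q ∈ Metric.sphere (0 : EuclideanSpace ℝ (Fin 3)) 1,
      (q 0 ≠ 0 ∨ q 1 ≠ 0) → Real.pi ^ 2 / 4 < F q := by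
    intro q hq hne
    rw [hFeq q]
    have hsum := hsph q hq
    have hle : (q 0) ^ 2 + (q 1) ^ 2 ≤ 1 := by nlinarith [sq_nonneg (q 2)]
    have := aux_strict (q 0) (q 1) hle hne
    calc Real.pi ^ 2 / 4 = (2 * Real.pi)⁻¹ * (Real.pi ^ 3 / 2) := by field_simp; ring
      _ < _ := by
        apply mul_lt_mul_of_pos_left this
        positivity
  ext p
  simp only [Set.mem_setOf_eq, Set.mem_insert_iff, Set.mem_singleton_iff]
  constructor
  · rintro ⟨hp, hmin⟩
    have hFn : F (!₂[0, 0, 1] : EuclideanSpace ℝ (Fin 3)) = Real.pi ^ 2 / 4 := by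
      apply hpole <;> simp
    have h1 : F p ≤ Real.pi ^ 2 / 4 := hFn ▸ hmin _ hnorth
    have hz : p 0 = 0 ∧ p 1 = 0 := by
      by_contra h
      rw [not_and_or] at h
      exact absurd h1 (not_le.mpr (hstrictF p hp h))
    obtain ⟨h0, h1'⟩ := hz
    have hsum := hsph p hp
    rw [h0, h1'] at hsum
    have h2 : (p 2) ^ 2 = 1 := by nlinarith
    have hcase : p 2 = 1 ∨ p 2 = -1 := by
      have hmul : (p 2 - 1) * (p 2 + 1) = 0 := by nlinarith
      rcases mul_eq_zero.mp hmul with h | h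
      · left; linarith
      · right; linarith
    rcases hcase with h | h
    · left
      ext i
      fin_cases i <;> simp [h0, h1', h]
    · right
      ext i
      fin_cases i <;> simp [h0, h1', h]
  · rintro (rfl | rfl)
    · refine ⟨hnorth, fun q hq => ?_⟩
      rw [show F (!₂[0, 0, 1] : EuclideanSpace ℝ (Fin 3)) = Real.pi ^ 2 / 4 from
        hpole _ (by simp) (by simp)]
      exact hlbF q hq
    · refine ⟨hsouth, fun q hq => ?_⟩
      rw [show F (!₂[0, 0, -1] : EuclideanSpace ℝ (Fin 3)) = Real.pi ^ 2 / 4 from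
        hpole _ (by simp) (by simp)]
      exact hlbF q hq
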